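/- arXiv:1009.4249 — 3 statements merged into one kernel-verified Lean document; each statement's English description precedes it below -/
import Mathlib

section
/- Let k be a non-discrete Hausdorff topological field and k' a field. Let U be an open subset of k containing 0, and let f : k → k' be a function satisfying: (i) for all x, y ∈ k with x ∈ U, y ∈ U and x + y ∈ U one has f(x + y) = f(x) + f(y); (ii) for all x, y ∈ k with x ∈ U, y ∈ U and x·y ∈ U one has f(x·y) = f(x)·f(y); and (iii) f(x) ≠ 0 for every nonzero x ∈ U. Then there exists a unique ring homomorphism φ : k → k' such that φ(x) = f(x) for all x ∈ U. (This is the paper's key lemma that local field homomorphisms extend uniquely to global field homomorphisms.) -/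
/-- Local field homomorphisms on a non-discrete Hausdorff topological field
extend uniquely to global field homomorphisms. -/
theorem local_field_hom_extends
    {k k' : Type*} [Field k] [Field k']
    [TopologicalSpace k] [IsTopologicalRing k] [ContinuousInv₀ k] [T2Space k]
    (hnd : ¬ DiscreteTopology k)
    (U : Set k) (hU : IsOpen U) (h0 : (0 : k) ∈ U)
    (f : k → k')
    (hadd : ∀ x y : k, x ∈ U → y ∈ U → x + y ∈ U → f (x + y) = f x + f y)
    (hmul : ∀ x y : k, x ∈ U → y ∈ U → x * y ∈ U → f (x * y) = f x * f y)
    (hnz : ∀ x ∈ U, x ≠ 0 → f x ≠ 0) :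
    ∃! φ : k →+* k', ∀ x ∈ U, φ x = f x := by
  -- every neighborhood of 0 contains a nonzero element
  have key : ∀ V ∈ nhds (0 : k), ∃ t : k, t ≠ 0 ∧ t ∈ V := by
    intro V hV
    by_contra h
    push_neg at h
    have hsub : V ⊆ {(0 : k)} := by
      intro t ht
      by_contra ht0
      exact h t (by simpa using ht0) ht
    have : ({(0 : k)} : Set k) ∈ nhds (0 : k) := Filter.mem_of_superset hV hsub
    obtain ⟨O, hOsub, hOopen, hO0⟩ := mem_nhds_iff.mp this
    have hO : O = {(0 : k)} := Set.eq_singleton_iff_unique_mem.mpr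
      ⟨hO0, fun y hy => hOsub hy⟩
    exact hnd (discreteTopology_iff_isOpen_singleton_zero.mpr (hO ▸ hOopen))
  -- preimages of U under multiplication maps are neighborhoods of 0
  have memU : U ∈ nhds (0 : k) := hU.mem_nhds h0
  have mem1 : ∀ c : k, (fun t : k => t * c) ⁻¹' U ∈ nhds (0 : k) := by
    intro c
    have hc : Continuous fun t : k => t * c := continuous_id.mul continuous_const
    have := hc.continuousAt (x := (0 : k))
    have h00 : (fun t : k => t * c) 0 = 0 := by simp
    exact hc.continuousAt.preimage_mem_nhds (by simpa using memU)
  have mem2 : ∀ c : k, (fun t : k => t * t * c) ⁻¹' U ∈ nhds (0 : k) := by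
    intro c
    have hc : Continuous fun t : k => t * t * c :=
      (continuous_id.mul continuous_id).mul continuous_const
    have h00 : (fun t : k => t * t * c) 0 = 0 := by simp
    exact hc.continuousAt.preimage_mem_nhds (by simpa using memU)
  -- f 0 = 0
  have hf0 : f 0 = 0 := by
    have := hadd 0 0 h0 h0 (by simpa using h0)
    simpa using this.symm
  -- witnesses
  have hwit : ∀ x : k, ∃ t : k, t ≠ 0 ∧ t ∈ U ∧ t * x ∈ U := by
    intro x
    obtain ⟨t, ht0, htm⟩ := key (U ∩ (fun t : k => t * x) ⁻¹' U)
      (Filter.inter_mem memU (mem1 x))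
    exact ⟨t, ht0, htm.1, htm.2⟩
  -- well-definedness
  have W : ∀ (x s t : k), s ≠ 0 → s ∈ U → s * x ∈ U → t ≠ 0 → t ∈ U → t * x ∈ U →
      f (s * x) * (f s)⁻¹ = f (t * x) * (f t)⁻¹ := by
    intro x s t hs0 hsU hsxU ht0 htU htxU
    rcases eq_or_ne x 0 with rfl | hx0
    · simp [hf0]
    · obtain ⟨u, hu0, hum⟩ := key
        (U ∩ ((fun v : k => v * x) ⁻¹' U ∩ ((fun v : k => v * (s * x)) ⁻¹' U ∩
          (fun v : k => v * (t * x)) ⁻¹' U)))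
        (Filter.inter_mem memU (Filter.inter_mem (mem1 x)
          (Filter.inter_mem (mem1 (s * x)) (mem1 (t * x)))))
      obtain ⟨huU, huxU, husxU, hutxU⟩ := hum
      have e1 : f (u * (s * x)) = f u * f (s * x) := hmul u (s * x) huU hsxU husxU
      have e2 : f (s * (u * x)) = f s * f (u * x) :=
        hmul s (u * x) hsU huxU (by rw [show s * (u * x) = u * (s * x) by ring]; exact husxU)
      have e12 : f u * f (s * x) = f s * f (u * x) := by
        rw [← e1, ← e2, show u * (s * x) = s * (u * x) by ring]
      have e3 : f (u * (t * x)) = f u * f (t * x) := hmul u (t * x) huU htxU hutxU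
      have e4 : f (t * (u * x)) = f t * f (u * x) :=
        hmul t (u * x) htU huxU (by rw [show t * (u * x) = u * (t * x) by ring]; exact hutxU)
      have e34 : f u * f (t * x) = f t * f (u * x) := by
        rw [← e3, ← e4, show u * (t * x) = t * (u * x) by ring]
      have hfs : f s ≠ 0 := hnz s hsU hs0
      have hft : f t ≠ 0 := hnz t htU ht0
      have hfu : f u ≠ 0 := hnz u huU hu0
      have hfux : f (u * x) ≠ 0 := hnz (u * x) huxU (mul_ne_zero hu0 hx0)
      have hs' : f (s * x) * (f s)⁻¹ = f (u * x) * (f u)⁻¹ := by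
        field_simp
        rw [mul_comm x u]
        linear_combination e12
      have ht' : f (t * x) * (f t)⁻¹ = f (u * x) * (f u)⁻¹ := by
        field_simp
        rw [mul_comm x u]
        linear_combination e34
      rw [hs', ht']
    -- end W
  choose w hw0 hwU hwxU using hwit
  set g : k → k' := fun x => f (w x * x) * (f (w x))⁻¹ with hg
  have gval : ∀ (x t : k), t ≠ 0 → t ∈ U → t * x ∈ U → g x = f (t * x) * (f t)⁻¹ := by
    intro x t ht0 htU htxU
    exact W x (w x) t (hw0 x) (hwU x) (hwxU x) ht0 htU htxU
  have gU : ∀ x ∈ U, g x = f x := by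
    intro x hx
    have := hmul (w x) x (hwU x) hx (hwxU x)
    rw [hg]
    simp only [this]
    rw [mul_comm (f (w x)) (f x), mul_assoc]
    rw [mul_inv_cancel₀ (hnz _ (hwU x) (hw0 x)), mul_one]
  have g1 : g 1 = 1 := by
    obtain ⟨t, ht0, htm⟩ := key U memU
    rw [gval 1 t ht0 htm (by simpa using htm)]
    simp [mul_inv_cancel₀ (hnz t htm ht0)]
  have gadd : ∀ x y : k, g (x + y) = g x + g y := by
    intro x y
    obtain ⟨t, ht0, htm⟩ := key
      (U ∩ ((fun v : k => v * x) ⁻¹' U ∩ ((fun v : k => v * y) ⁻¹' U ∩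
        (fun v : k => v * (x + y)) ⁻¹' U)))
      (Filter.inter_mem memU (Filter.inter_mem (mem1 x)
        (Filter.inter_mem (mem1 y) (mem1 (x + y)))))
    obtain ⟨htU, htxU, htyU, htsU⟩ := htm
    rw [gval (x + y) t ht0 htU htsU, gval x t ht0 htU htxU, gval y t ht0 htU htyU]
    have : f (t * (x + y)) = f (t * x) + f (t * y) := by
      rw [mul_add]
      exact hadd (t * x) (t * y) htxU htyU (by rw [← mul_add]; exact htsU)
    rw [this, add_mul]
  have gmul : ∀ x y : k, g (x * y) = g x * g y := by
    intro x y
    obtain ⟨t, ht0, htm⟩ := key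
      (U ∩ ((fun v : k => v * x) ⁻¹' U ∩ ((fun v : k => v * y) ⁻¹' U ∩
        ((fun v : k => v * v * 1) ⁻¹' U ∩ (fun v : k => v * v * (x * y)) ⁻¹' U))))
      (Filter.inter_mem memU (Filter.inter_mem (mem1 x)
        (Filter.inter_mem (mem1 y) (Filter.inter_mem (mem2 1) (mem2 (x * y))))))
    obtain ⟨htU, htxU, htyU, ht2U, ht2xyU⟩ := htm
    simp only [Set.mem_preimage, mul_one] at ht2U ht2xyU
    have ht20 : t * t ≠ 0 := mul_ne_zero ht0 ht0
    rw [gval (x * y) (t * t) ht20 ht2U ht2xyU,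
      gval x t ht0 htU htxU, gval y t ht0 htU htyU]
    have e1 : f (t * t * (x * y)) = f (t * x) * f (t * y) := by
      rw [show t * t * (x * y) = (t * x) * (t * y) by ring]
      exact hmul (t * x) (t * y) htxU htyU
        (by rw [show (t * x) * (t * y) = t * t * (x * y) by ring]; exact ht2xyU)
    have e2 : f (t * t) = f t * f t := hmul t t htU htU ht2U
    rw [e1, e2, mul_inv]
    ring
  have g0 : g 0 = 0 := by rw [gU 0 h0, hf0]
  refine ⟨⟨⟨⟨g, g1⟩, gmul⟩, g0, gadd⟩, ?_, ?_⟩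
  · intro x hx
    exact gU x hx
  · intro ψ hψ
    ext x
    obtain ⟨t, ht0, htU, htxU⟩ : ∃ t : k, t ≠ 0 ∧ t ∈ U ∧ t * x ∈ U := ⟨w x, hw0 x, hwU x, hwxU x⟩
    have hψt : ψ t = f t := hψ t htU
    have hψtx : ψ (t * x) = f (t * x) := hψ (t * x) htxU
    have hft : f t ≠ 0 := hnz t htU ht0
    have : ψ t * ψ x = f (t * x) := by rw [← map_mul]; exact hψtx
    have hx' : ψ x = f (t * x) * (f t)⁻¹ := by
      rw [← this, hψt]
      field_simp
    simp only [RingHom.coe_mk, MonoidHom.coe_mk, OneHom.coe_mk]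
    rw [hx', gval x t ht0 htU htxU]
end

section
/- Let k be a non-discrete Hausdorff topological field and k' a nontrivial commutative ring. If φ, ψ : k → k' are ring homomorphisms that agree on some nonempty open subset of k, then φ = ψ. -/
/-- Ring homomorphisms out of a non-discrete Hausdorff topological field that
agree on a nonempty open set are equal. -/
theorem ringHom_eq_of_eqOn_open
    {k k' : Type*} [Field k] [CommRing k'] [Nontrivial k']
    [TopologicalSpace k] [IsTopologicalRing k] [ContinuousInv₀ k] [T2Space k]
    (hnd : ¬ DiscreteTopology k)
    (φ ψ : k →+* k') (U : Set k) (hU : IsOpen U) (hne : U.Nonempty)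
    (hagree : ∀ x ∈ U, φ x = ψ x) :
    φ = ψ := by
  obtain ⟨u, hu⟩ := hne
  ext x
  -- W = set of t with u + t ∈ U and u + t * x ∈ U
  set W : Set k := ((fun t => u + t) ⁻¹' U) ∩ ((fun t => u + t * x) ⁻¹' U) with hW
  have hWopen : IsOpen W :=
    (hU.preimage (by continuity)).inter (hU.preimage (by continuity))
  have h0 : (0 : k) ∈ W := by simp [hW, hu]
  -- there is a nonzero element of W
  have hnz : ∃ t ∈ W, t ≠ 0 := by
    by_contra h
    push_neg at h
    have : W = {0} := Set.eq_singleton_iff_unique_mem.mpr ⟨h0, fun t ht => h t ht⟩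
    exact hnd (discreteTopology_iff_isOpen_singleton_zero.mpr (this ▸ hWopen))
  obtain ⟨t, ⟨ht1, ht2⟩, htne⟩ := hnz
  have hφt : φ t = ψ t := by
    have h1 := hagree _ ht1
    simp only [map_add] at h1
    have h2 := hagree _ hu
    rw [h2] at h1
    exact add_left_cancel h1
  have h3 := hagree _ ht2
  simp only [map_add, map_mul] at h3
  rw [hagree _ hu, hφt] at h3
  have h4 : ψ t * φ x = ψ t * ψ x := add_left_cancel h3
  have hunit : IsUnit (ψ t) := (isUnit_iff_ne_zero.mpr htne).map ψ
  exact hunit.mul_left_cancel h4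
end

section
/- Let k be a non-discrete Hausdorff topological field and let U be a nonempty open subset of k. Then the subfield of k generated by U is all of k. -/
/-- In a non-discrete Hausdorff topological field, the subfield generated by any
nonempty open set is the whole field. -/
theorem subfield_closure_of_open_eq_top
    {k : Type*} [Field k]
    [TopologicalSpace k] [IsTopologicalRing k] [ContinuousInv₀ k] [T2Space k]
    (hnd : ¬ DiscreteTopology k)
    (U : Set k) (hU : IsOpen U) (hne : U.Nonempty) :
    Subfield.closure U = ⊤ := by
  rw [eq_top_iff]
  intro x _
  obtain ⟨u, hu⟩ := hne
  set K := Subfield.closure U with hK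
  have hUK : U ⊆ K := Subfield.subset_closure
  have huK : u ∈ K := hUK hu
  set V : Set k := (· + u) ⁻¹' U with hV
  have hVopen : IsOpen V := hU.preimage (continuous_id.add continuous_const)
  have h0V : (0 : k) ∈ V := by simpa [hV] using hu
  have hVK : ∀ y ∈ V, y ∈ K := by
    intro y hy
    have : y + u ∈ K := hUK hy
    simpa using sub_mem this huK
  rcases eq_or_ne x 0 with rfl | hx
  · exact zero_mem K
  set W : Set k := (x * ·) ⁻¹' V with hW
  have hWopen : IsOpen W := hVopen.preimage (continuous_const.mul continuous_id)
  have h0W : (0 : k) ∈ W := by simpa [hW] using h0V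
  have hndisc : ¬ IsOpen ({0} : Set k) := fun h =>
    hnd (discreteTopology_iff_isOpen_singleton_zero.mpr h)
  have hexists : ∃ y ∈ V ∩ W, y ≠ 0 := by
    by_contra h
    push_neg at h
    have hsub : V ∩ W = ({0} : Set k) := by
      apply Set.eq_singleton_iff_unique_mem.mpr
      exact ⟨⟨h0V, h0W⟩, fun y hy => h y hy⟩
    exact hndisc (hsub ▸ (hVopen.inter hWopen))
  obtain ⟨y, ⟨hyV, hyW⟩, hy0⟩ := hexists
  have hyK : y ∈ K := hVK y hyV
  have hxyK : x * y ∈ K := hVK _ hyW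
  have : (x * y) * y⁻¹ ∈ K := mul_mem hxyK (inv_mem hyK)
  simpa [mul_assoc, mul_inv_cancel₀ hy0] using this
end
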